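/- arXiv:2604.14658 — 2 statements merged into one kernel-verified Lean document; each statement's English description precedes it below -/
import Mathlib

section
/- Let p > 1 with conjugate exponent q, let a > 0, and let u : [0,a] × [0,c] → ℝ be C¹ with u(0, x₂) = 0 for all x₂ ∈ [0,c]. Then ∫∫_{[0,a]×[0,c]} |u(x₁,x₂)|^p dx₁ dx₂ ≤ a^(p/q + 1) ∫∫_{[0,a]×[0,c]} |∇u(x₁,x₂)|^p dx₁ dx₂. -/
open MeasureTheory Set

noncomputable abbrev E2 := EuclideanSpace ℝ (Fin 2)

/-- The rectangle `[0,a] × [0,c]` in the Euclidean plane. -/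
def rect (a c : ℝ) : Set E2 := {x : E2 | x 0 ∈ Icc 0 a ∧ x 1 ∈ Icc 0 c}

noncomputable def pt (s t : ℝ) : E2 := (WithLp.equiv 2 (Fin 2 → ℝ)).symm ![s, t]

lemma rect_uniqueDiffOn {a c : ℝ} (ha : 0 < a) (hc : 0 < c) : UniqueDiffOn ℝ (rect a c) := by
  apply uniqueDiffOn_convex
  · intro x hx y hy s t hs ht hst
    constructor
    · have : (s • x + t • y) 0 = s * x 0 + t * y 0 := rfl
      rw [this]; exact convex_Icc 0 a hx.1 hy.1 hs ht hst
    · have : (s • x + t • y) 1 = s * x 1 + t * y 1 := rfl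
      rw [this]; exact convex_Icc 0 c hx.2 hy.2 hs ht hst
  · refine ⟨pt (a/2) (c/2), ?_⟩
    have hopen : IsOpen {x : E2 | x 0 ∈ Ioo 0 a ∧ x 1 ∈ Ioo 0 c} := by
      apply IsOpen.inter
      · exact isOpen_Ioo.preimage (EuclideanSpace.proj (0 : Fin 2)).continuous
      · exact isOpen_Ioo.preimage (EuclideanSpace.proj (1 : Fin 2)).continuous
    have hsub : {x : E2 | x 0 ∈ Ioo 0 a ∧ x 1 ∈ Ioo 0 c} ⊆ rect a c :=
      fun x hx => ⟨Ioo_subset_Icc_self hx.1, Ioo_subset_Icc_self hx.2⟩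
    apply interior_maximal hsub hopen
    have h0 : pt (a/2) (c/2) 0 = a/2 := rfl
    have h1 : pt (a/2) (c/2) 1 = c/2 := rfl
    exact ⟨by rw [h0]; constructor <;> linarith, by rw [h1]; constructor <;> linarith⟩

lemma holder_aux {p q a : ℝ} (hpq : Real.HolderConjugate p q) (ha : 0 < a)
    {f : ℝ → ℝ} (hf : ContinuousOn f (Icc 0 a)) (hf0 : ∀ x ∈ Icc 0 a, 0 ≤ f x) :
    (∫ t in Icc 0 a, f t) ^ p ≤ a ^ (p / q) * ∫ t in Icc 0 a, f t ^ p := by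
  set μ := (volume : Measure ℝ).restrict (Icc 0 a) with hμ
  haveI : IsFiniteMeasure μ := by
    constructor
    rw [hμ, Measure.restrict_apply_univ]
    exact measure_Icc_lt_top
  obtain ⟨C, hC⟩ := isCompact_Icc.exists_bound_of_continuousOn hf
  have hmeas : AEStronglyMeasurable f μ := hf.aestronglyMeasurable measurableSet_Icc
  have haeb : ∀ᵐ x ∂μ, ‖f x‖ ≤ C := by
    filter_upwards [ae_restrict_mem measurableSet_Icc] with x hx using hC x hx
  have hmemp : MemLp f (ENNReal.ofReal p) μ := MemLp.of_bound hmeas C haeb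
  have hmemq : MemLp (fun _ : ℝ => (1:ℝ)) (ENNReal.ofReal q) μ := memLp_const 1
  have hf0' : 0 ≤ᶠ[ae μ] f := by
    filter_upwards [ae_restrict_mem measurableSet_Icc] with x hx using hf0 x hx
  have h1 : 0 ≤ᶠ[ae μ] (fun _ : ℝ => (1:ℝ)) := Filter.Eventually.of_forall (fun _ => zero_le_one)
  have H := integral_mul_le_Lp_mul_Lq_of_nonneg hpq hf0' h1 hmemp hmemq
  simp only [mul_one, Real.one_rpow] at H
  have hvol : ∫ (_ : ℝ), (1:ℝ) ∂μ = a := by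
    simp [hμ, Real.volume_Icc, ENNReal.toReal_ofReal ha.le, ha.le]
  rw [hvol] at H
  -- H : ∫ f ∂μ ≤ (∫ f^p ∂μ)^(1/p) * a^(1/q)
  have hintp0 : 0 ≤ ∫ t, f t ^ p ∂μ := by
    apply integral_nonneg_of_ae
    filter_upwards [hf0'] with x hx using Real.rpow_nonneg hx p
  have hL0 : 0 ≤ ∫ t, f t ∂μ := integral_nonneg_of_ae hf0'
  calc (∫ t in Icc 0 a, f t) ^ p ≤ ((∫ t, f t ^ p ∂μ) ^ (1/p) * a ^ (1/q)) ^ p := by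
        exact Real.rpow_le_rpow hL0 H hpq.pos.le
    _ = a ^ (p / q) * ∫ t in Icc 0 a, f t ^ p := by
        rw [Real.mul_rpow (Real.rpow_nonneg hintp0 _) (Real.rpow_nonneg ha.le _),
          ← Real.rpow_mul hintp0, ← Real.rpow_mul ha.le,
          one_div_mul_cancel (ne_of_gt hpq.pos), Real.rpow_one,
          one_div_mul_eq_div, mul_comm]

lemma intInt {g : ℝ → ℝ} {a s : ℝ} (h : ContinuousOn g (Icc 0 a)) (hs : s ∈ Icc 0 a) :
    IntervalIntegrable g volume 0 s := by
  apply ContinuousOn.intervalIntegrable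
  rw [uIcc_of_le hs.1]
  exact h.mono (Icc_subset_Icc_right hs.2)

lemma key (p q a c : ℝ) (hpq : Real.HolderConjugate p q)
    (ha : 0 < a) (hc : 0 < c) (u : E2 → ℝ)
    (hu : ContDiffOn ℝ 1 u (rect a c))
    (h0 : ∀ x : E2, x 0 = 0 → x 1 ∈ Icc 0 c → u x = 0)
    {x₂ : ℝ} (hx₂ : x₂ ∈ Icc 0 c) :
    ∫ x₁ in Icc 0 a, |u (pt x₁ x₂)| ^ p ≤
      a ^ (p / q + 1) * ∫ x₁ in Icc 0 a, ‖fderivWithin ℝ u (rect a c) (pt x₁ x₂)‖ ^ p := by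
  set R := rect a c with hRdef
  set D := fderivWithin ℝ u R with hDdef
  have hRu : UniqueDiffOn ℝ R := rect_uniqueDiffOn ha hc
  have hD : ContinuousOn D R := hu.continuousOn_fderivWithin hRu le_rfl
  set v : E2 := pt 1 0 with hv
  set L : ℝ → E2 := fun t => pt t x₂ with hLdef
  have hmaps : MapsTo L (Icc 0 a) R := fun t ht => ⟨ht, hx₂⟩
  have hLeq : L = fun t => t • v + pt 0 x₂ := by
    funext t
    ext i; fin_cases i <;> simp [hLdef, hv, pt]
  have hLder : ∀ t : ℝ, HasDerivAt L v t := by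
    intro t
    rw [hLeq]
    simpa using ((hasDerivAt_id t).smul_const v).add_const (pt 0 x₂)
  have hLcont : Continuous L := continuous_iff_continuousAt.2 fun t => (hLder t).continuousAt
  set φ : ℝ → ℝ := fun t => D (L t) v with hφdef
  set fL : ℝ → ℝ := fun t => ‖D (L t)‖ with hfLdef
  have hDL : ContinuousOn (fun t => D (L t)) (Icc 0 a) := hD.comp hLcont.continuousOn hmaps
  have hφcont : ContinuousOn φ (Icc 0 a) := hDL.clm_apply continuousOn_const
  have hfLcont : ContinuousOn fL (Icc 0 a) := hDL.norm
  have hv1 : ‖v‖ = 1 := by simp [hv, pt, EuclideanSpace.norm_eq, Fin.sum_univ_two]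
  have hφle : ∀ t : ℝ, |φ t| ≤ fL t := by
    intro t
    have := (D (L t)).le_opNorm v
    rwa [hv1, mul_one] at this
  have hudiff : ∀ t ∈ Icc 0 a, HasDerivWithinAt (u ∘ L) (φ t) (Icc 0 a) t := fun t ht =>
    ((hu.differentiableOn one_ne_zero) (L t) (hmaps ht)).hasFDerivWithinAt.comp_hasDerivWithinAt t
      (hLder t).hasDerivWithinAt hmaps
  have claim1 : ∀ s ∈ Icc 0 a, u (L s) = ∫ t in (0:ℝ)..s, φ t := by
    intro s hs
    have hcont : ContinuousOn (u ∘ L) (Icc 0 s) :=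
      (hu.continuousOn.comp hLcont.continuousOn hmaps).mono (Icc_subset_Icc_right hs.2)
    have hder : ∀ t ∈ Ioo 0 s, HasDerivWithinAt (u ∘ L) (φ t) (Ioi t) t := by
      intro t ht
      have htmem : t ∈ Icc 0 a := ⟨ht.1.le, ht.2.le.trans hs.2⟩
      apply (hudiff t htmem).mono_of_mem_nhdsWithin
      have h1 : Ioc t a ∈ nhdsWithin t (Ioi t) :=
        Ioc_mem_nhdsGT_of_mem ⟨le_rfl, ht.2.trans_le hs.2⟩
      exact Filter.mem_of_superset h1 (fun y hy => ⟨ht.1.le.trans hy.1.le, hy.2⟩)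
    have hint : IntervalIntegrable φ volume 0 s := intInt hφcont hs
    have hftc := intervalIntegral.integral_eq_sub_of_hasDeriv_right_of_le hs.1 hcont hder hint
    have h00 : u (L 0) = 0 := h0 (L 0) rfl hx₂
    rw [hftc]
    simp [Function.comp, h00]
  have claim2 : ∀ s ∈ Icc 0 a, |u (L s)| ≤ ∫ t in Icc 0 a, fL t := by
    intro s hs
    rw [claim1 s hs]
    have step1 : |∫ t in (0:ℝ)..s, φ t| ≤ ∫ t in (0:ℝ)..s, |φ t| := by
      simpa [Real.norm_eq_abs] using intervalIntegral.norm_integral_le_integral_norm (f := φ) hs.1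
    have step2 : ∫ t in (0:ℝ)..s, |φ t| ≤ ∫ t in (0:ℝ)..s, fL t := by
      apply intervalIntegral.integral_mono_on hs.1 (intInt hφcont.abs hs) (intInt hfLcont hs)
      intro x _
      exact hφle x
    have step3 : ∫ t in (0:ℝ)..s, fL t ≤ ∫ t in (0:ℝ)..a, fL t := by
      apply intervalIntegral.integral_mono_interval le_rfl hs.1 hs.2
      · exact Filter.Eventually.of_forall fun x => norm_nonneg _
      · exact intInt hfLcont (right_mem_Icc.2 ha.le)
    have step4 : ∫ t in (0:ℝ)..a, fL t = ∫ t in Icc 0 a, fL t := by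
      rw [intervalIntegral.integral_of_le ha.le, ← integral_Icc_eq_integral_Ioc]
    calc |∫ t in (0:ℝ)..s, φ t| ≤ ∫ t in (0:ℝ)..s, |φ t| := step1
      _ ≤ ∫ t in (0:ℝ)..s, fL t := step2
      _ ≤ ∫ t in (0:ℝ)..a, fL t := step3
      _ = ∫ t in Icc 0 a, fL t := step4
  have hBp : (∫ t in Icc 0 a, fL t) ^ p ≤ a ^ (p/q) * ∫ t in Icc 0 a, fL t ^ p :=
    holder_aux hpq ha hfLcont (fun x _ => norm_nonneg _)
  set K := a ^ (p/q) * ∫ t in Icc 0 a, fL t ^ p with hKdef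
  have pointwise : ∀ s ∈ Icc 0 a, |u (L s)| ^ p ≤ K := fun s hs =>
    (Real.rpow_le_rpow (abs_nonneg _) (claim2 s hs) hpq.pos.le).trans hBp
  have hbd := norm_setIntegral_le_of_norm_le_const (μ := volume) (s := Icc 0 a) measure_Icc_lt_top (C := K)
    (f := fun s => |u (L s)| ^ p)
    (fun s hs => by
      rw [Real.norm_eq_abs, abs_of_nonneg (Real.rpow_nonneg (abs_nonneg _) _)]
      exact pointwise s hs)
  have hvol : (volume : Measure ℝ).real (Icc 0 a) = a := by
    simp [Real.volume_real_Icc_of_le ha.le]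
  rw [Real.norm_eq_abs, hvol] at hbd
  calc ∫ x₁ in Icc 0 a, |u (L x₁)| ^ p
      ≤ |∫ x₁ in Icc 0 a, |u (L x₁)| ^ p| := le_abs_self _
    _ ≤ K * a := hbd
    _ = a ^ (p/q + 1) * ∫ x₁ in Icc 0 a, fL x₁ ^ p := by
        rw [hKdef, Real.rpow_add ha, Real.rpow_one]; ring

/-- Friedrichs-type inequality on a strip: if `p > 1` has conjugate exponent `q`,
`a > 0`, and `u` is C¹ on `[0,a] × [0,c]` with `u(0,x₂) = 0` for all `x₂ ∈ [0,c]`, then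
`∫∫ |u|^p ≤ a^(p/q+1) ∫∫ |∇u|^p`. -/
theorem stmt3 (p q a c : ℝ) (hp : 1 < p) (hpq : 1 / p + 1 / q = 1)
    (ha : 0 < a) (hc : 0 < c) (u : E2 → ℝ)
    (hu : ContDiffOn ℝ 1 u (rect a c))
    (h0 : ∀ x : E2, x 0 = 0 → x 1 ∈ Icc 0 c → u x = 0) :
    ∫ x in rect a c, |u x| ^ p ≤
      a ^ (p / q + 1) * ∫ x in rect a c, ‖fderivWithin ℝ u (rect a c) x‖ ^ p := by
  have hcj : Real.HolderConjugate p q := Real.holderConjugate_iff.mpr ⟨hp, by simpa [one_div] using hpq⟩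
  have hp0 : (0:ℝ) ≤ p := hcj.pos.le
  set R := rect a c with hRdef
  set D := fderivWithin ℝ u R with hDdef
  have hRu : UniqueDiffOn ℝ R := rect_uniqueDiffOn ha hc
  have hD : ContinuousOn D R := hu.continuousOn_fderivWithin hRu le_rfl
  set S : Set (ℝ × ℝ) := Icc 0 a ×ˢ Icc 0 c with hSdef
  set Φ := (MeasurableEquiv.toLp 2 (Fin 2 → ℝ)).symm.trans MeasurableEquiv.finTwoArrow with hΦdef
  have hmp : MeasurePreserving (⇑Φ) volume volume := by
    rw [hΦdef, MeasurableEquiv.coe_trans]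
    exact (volume_preserving_finTwoArrow ℝ).comp
      (EuclideanSpace.volume_preserving_symm_measurableEquiv_toLp (Fin 2))
  have hpre : ⇑Φ ⁻¹' S = R := by
    ext x
    rw [mem_preimage, Set.mem_prod]
    exact Iff.rfl
  have htrans : ∀ G : E2 → ℝ, ∫ x in R, G x = ∫ z in S, G (pt z.1 z.2) := by
    intro G
    have h := hmp.setIntegral_preimage_emb Φ.measurableEmbedding (fun z => G (Φ.symm z)) S
    rw [hpre] at h
    simp only [MeasurableEquiv.symm_apply_apply] at h
    exact h
  -- continuity of the point map
  have hptc : Continuous (fun z : ℝ × ℝ => pt z.1 z.2) := by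
    have heq : (fun z : ℝ × ℝ => pt z.1 z.2) = fun z => z.1 • pt 1 0 + z.2 • pt 0 1 := by
      funext z; ext i; fin_cases i <;> simp [pt]
    rw [heq]
    exact (continuous_fst.smul continuous_const).add (continuous_snd.smul continuous_const)
  have hptmaps : MapsTo (fun z : ℝ × ℝ => pt z.1 z.2) S R := fun z hz => ⟨hz.1, hz.2⟩
  set G₁ : ℝ × ℝ → ℝ := fun z => |u (pt z.1 z.2)| ^ p with hG₁def
  set G₂ : ℝ × ℝ → ℝ := fun z => ‖D (pt z.1 z.2)‖ ^ p with hG₂def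
  have hG₁c : ContinuousOn G₁ S :=
    ((hu.continuousOn.comp hptc.continuousOn hptmaps).abs).rpow_const (fun x _ => Or.inr hp0)
  have hG₂c : ContinuousOn G₂ S :=
    ((hD.comp hptc.continuousOn hptmaps).norm).rpow_const (fun x _ => Or.inr hp0)
  have hScomp : IsCompact S := isCompact_Icc.prod isCompact_Icc
  have hG₁i : IntegrableOn G₁ S := hG₁c.integrableOn_compact hScomp
  have hG₂i : IntegrableOn G₂ S := hG₂c.integrableOn_compact hScomp
  have hprod : ((volume : Measure ℝ).restrict (Icc 0 a)).prod
      ((volume : Measure ℝ).restrict (Icc 0 c)) = (volume : Measure (ℝ × ℝ)).restrict S := by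
    rw [Measure.prod_restrict, ← Measure.volume_eq_prod]
  have hfub : ∀ G : ℝ × ℝ → ℝ, IntegrableOn G S →
      ∫ z in S, G z = ∫ x₂ in Icc 0 c, ∫ x₁ in Icc 0 a, G (x₁, x₂) := by
    intro G hG
    rw [← hprod]
    exact integral_prod_symm G (by rwa [hprod])
  have hI₁ : IntegrableOn (fun x₂ => ∫ x₁ in Icc 0 a, G₁ (x₁, x₂)) (Icc 0 c) :=
    Integrable.integral_prod_right (by rwa [hprod])
  have hI₂ : IntegrableOn (fun x₂ => ∫ x₁ in Icc 0 a, G₂ (x₁, x₂)) (Icc 0 c) :=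
    Integrable.integral_prod_right (by rwa [hprod])
  have e₁ : ∫ x in R, |u x| ^ p = ∫ z in S, G₁ z := htrans (fun x => |u x| ^ p)
  have e₂ : ∫ x in R, ‖D x‖ ^ p = ∫ z in S, G₂ z := htrans (fun x => ‖D x‖ ^ p)
  rw [e₁, e₂, hfub G₁ hG₁i, hfub G₂ hG₂i, ← integral_const_mul]
  apply setIntegral_mono_on hI₁ (hI₂.const_mul _) measurableSet_Icc
  intro x₂ hx₂
  exact key p q a c hcj ha hc u hu h0 hx₂
end

section
/- Let B = B(x₀, r) be a closed ball in ℝ² and u ∈ C¹ on a neighborhood of B. Then for every x ∈ B, |u(x) - u_B| ≤ 2 ∫_B |∇u(y)| / |x - y| dy, where u_B = (1/(π r²)) ∫_B u(y) dy is the average of u over B. -/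
open MeasureTheory Metric

section PoincareAux
open Set Real
open scoped ENNReal NNReal

theorem lintegral_comp_polarCoord_symm' (f : ℝ × ℝ → ℝ≥0∞) :
    (∫⁻ p in polarCoord.target, ENNReal.ofReal p.1 * f (polarCoord.symm p)) = ∫⁻ p, f p := by
  set B : ℝ × ℝ → ℝ × ℝ →L[ℝ] ℝ × ℝ := fun p =>
    LinearMap.toContinuousLinearMap (Matrix.toLin (Module.Basis.finTwoProd ℝ) (Module.Basis.finTwoProd ℝ)
      !![Real.cos p.2, -p.1 * Real.sin p.2; Real.sin p.2, p.1 * Real.cos p.2])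
  have A : ∀ p ∈ polarCoord.target, HasFDerivWithinAt polarCoord.symm (B p) polarCoord.target p :=
    fun p _ => (hasFDerivAt_polarCoord_symm p).hasFDerivWithinAt
  have B_det : ∀ p, (B p).det = p.1 := by
    intro p
    conv_rhs => rw [← one_mul p.1, ← Real.cos_sq_add_sin_sq p.2]
    simp only [B, neg_mul, LinearMap.det_toContinuousLinearMap, LinearMap.det_toLin,
      Matrix.det_fin_two_of, sub_neg_eq_add]
    ring
  symm
  calc
    ∫⁻ p, f p = ∫⁻ p in polarCoord.source, f p := by
      rw [← setLIntegral_univ]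
      exact setLIntegral_congr polarCoord_source_ae_eq_univ.symm
    _ = ∫⁻ p in polarCoord.symm '' polarCoord.target, f p := by
      rw [polarCoord.symm_image_target_eq_source]
    _ = ∫⁻ p in polarCoord.target, ENNReal.ofReal |(B p).det| * f (polarCoord.symm p) := by
      exact lintegral_image_eq_lintegral_abs_det_fderiv_mul volume
        polarCoord.open_target.measurableSet A polarCoord.symm.injOn f
    _ = ∫⁻ p in polarCoord.target, ENNReal.ofReal p.1 * f (polarCoord.symm p) := by
      apply setLIntegral_congr_fun polarCoord.open_target.measurableSet
      intro p hp
      beta_reduce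
      rw [B_det, abs_of_pos hp.1]

theorem Complex.lintegral_comp_polarCoord_symm' (f : ℂ → ℝ≥0∞) :
    (∫⁻ p in polarCoord.target, ENNReal.ofReal p.1 * f (Complex.polarCoord.symm p)) =
      ∫⁻ z, f z := by
  rw [← (Complex.volume_preserving_equiv_real_prod.symm).lintegral_comp_emb
    Complex.measurableEquivRealProd.symm.measurableEmbedding,
    ← _root_.lintegral_comp_polarCoord_symm' (fun p => f (measurableEquivRealProd.symm p))]
  rfl

theorem polar_smul (p : ℝ × ℝ) (hp : p.1 ≠ 0) (t : ℝ) :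
    (t / p.1) • Complex.polarCoord.symm p = Complex.polarCoord.symm (t, p.2) := by
  rw [Complex.polarCoord_symm_apply, Complex.polarCoord_symm_apply]
  simp only [Complex.real_smul]
  push_cast
  rw [← mul_assoc, div_mul_cancel₀]
  exact_mod_cast hp

theorem polar_norm (p : ℝ × ℝ) : ‖Complex.polarCoord.symm p‖ = |p.1| := by
  rw [Complex.norm_polarCoord_symm]

theorem symm_cont : Continuous fun p : ℝ × ℝ => Complex.polarCoord.symm p := by
  have : (fun p : ℝ × ℝ => Complex.polarCoord.symm p) =
      fun p => ↑p.1 * (Real.cos p.2 + Real.sin p.2 * Complex.I) :=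
    funext fun p => Complex.polarCoord_symm_apply p
  rw [this]; fun_prop

theorem core0 (R : ℝ) (hR : 0 ≤ R) (W : ℂ → ℝ≥0∞) (hW : Measurable W) :
    (∫⁻ y in closedBall (0 : ℂ) R, ∫⁻ t in Ioc 0 ‖y‖, W ((t / ‖y‖) • y)) ≤
      ENNReal.ofReal (R ^ 2) * ∫⁻ z, W z / ENNReal.ofReal ‖z‖ := by
  set H : ℝ → ℝ≥0∞ := fun θ => ∫⁻ t in Ioc 0 R, W (Complex.polarCoord.symm (t, θ)) with hH
  have hWsymm : Measurable fun p : ℝ × ℝ => W (Complex.polarCoord.symm p) :=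
    hW.comp symm_cont.measurable
  have hHmeas : Measurable H := by
    apply Measurable.lintegral_prod_right (f := fun θ t => W (Complex.polarCoord.symm (t, θ)))
    exact hWsymm.comp (measurable_snd.prodMk measurable_fst)
  have hT : Complex.polarCoord.target = Ioi (0:ℝ) ×ˢ Ioo (-π) π := Complex.polarCoord_target
  -- Step 1: LHS via polar coordinates
  have step1 : (∫⁻ y in closedBall (0 : ℂ) R, ∫⁻ t in Ioc 0 ‖y‖, W ((t / ‖y‖) • y)) =
      ∫⁻ p in Complex.polarCoord.target, ENNReal.ofReal p.1 *
        (closedBall (0 : ℂ) R).indicator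
          (fun y => ∫⁻ t in Ioc 0 ‖y‖, W ((t / ‖y‖) • y)) (Complex.polarCoord.symm p) := by
    rw [← lintegral_indicator measurableSet_closedBall,
      ← Complex.lintegral_comp_polarCoord_symm']
    rfl
  -- Step 2: pointwise bound on the target
  have step2 : (∫⁻ p in Complex.polarCoord.target, ENNReal.ofReal p.1 *
        (closedBall (0 : ℂ) R).indicator
          (fun y => ∫⁻ t in Ioc 0 ‖y‖, W ((t / ‖y‖) • y)) (Complex.polarCoord.symm p)) ≤
      ∫⁻ p in Complex.polarCoord.target,
        (Ioc (0:ℝ) R).indicator (fun _ => ENNReal.ofReal R) p.1 * H p.2 := by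
    apply setLIntegral_mono' Complex.polarCoord.open_target.measurableSet
    rintro p hp
    rw [hT] at hp
    have hp1 : 0 < p.1 := hp.1
    by_cases hmem : Complex.polarCoord.symm p ∈ closedBall (0 : ℂ) R
    · have hnorm : ‖Complex.polarCoord.symm p‖ = p.1 := by
        rw [polar_norm, abs_of_pos hp1]
      have hle : p.1 ≤ R := by
        have := mem_closedBall_zero_iff.1 hmem
        rwa [hnorm] at this
      rw [indicator_of_mem hmem, indicator_of_mem (by exact ⟨hp1, hle⟩)]
      have hcongr : (∫⁻ t in Ioc 0 ‖Complex.polarCoord.symm p‖,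
          W ((t / ‖Complex.polarCoord.symm p‖) • Complex.polarCoord.symm p)) =
          ∫⁻ t in Ioc 0 p.1, W (Complex.polarCoord.symm (t, p.2)) := by
        rw [hnorm]
        exact lintegral_congr fun t => by rw [polar_smul p hp1.ne']
      rw [hcongr]
      exact mul_le_mul' (ENNReal.ofReal_le_ofReal hle)
        (lintegral_mono_set (Ioc_subset_Ioc_right hle))
    · rw [indicator_of_notMem hmem, mul_zero]
      exact zero_le
  -- Step 3: separate the product integral
  have step3 : (∫⁻ p in Complex.polarCoord.target,
        (Ioc (0:ℝ) R).indicator (fun _ => ENNReal.ofReal R) p.1 * H p.2) =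
      (∫⁻ ρ in Ioi (0:ℝ), (Ioc (0:ℝ) R).indicator (fun _ => ENNReal.ofReal R) ρ) *
        ∫⁻ θ in Ioo (-π) π, H θ := by
    rw [hT, Measure.volume_eq_prod, ← Measure.prod_restrict,
      lintegral_prod_mul ((measurable_const.indicator measurableSet_Ioc).aemeasurable)
        hHmeas.aemeasurable]
  -- step 4
  have step4 : (∫⁻ ρ in Ioi (0:ℝ), (Ioc (0:ℝ) R).indicator (fun _ => ENNReal.ofReal R) ρ) ≤
      ENNReal.ofReal R * ENNReal.ofReal R := by
    calc (∫⁻ ρ in Ioi (0:ℝ), (Ioc (0:ℝ) R).indicator (fun _ => ENNReal.ofReal R) ρ)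
        ≤ ∫⁻ ρ, (Ioc (0:ℝ) R).indicator (fun _ => ENNReal.ofReal R) ρ :=
          setLIntegral_le_lintegral _ _
      _ = ENNReal.ofReal R * volume (Ioc (0:ℝ) R) := lintegral_indicator_const measurableSet_Ioc _
      _ = ENNReal.ofReal R * ENNReal.ofReal R := by rw [Real.volume_Ioc, sub_zero]
  -- step 5
  have step5 : (∫⁻ θ in Ioo (-π) π, H θ) ≤ ∫⁻ z, W z / ENNReal.ofReal ‖z‖ := by
    rw [← Complex.lintegral_comp_polarCoord_symm' (fun z => W z / ENNReal.ofReal ‖z‖)]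
    have keq : ∀ p ∈ Complex.polarCoord.target,
        W (Complex.polarCoord.symm p) ≤ ENNReal.ofReal p.1 *
          (W (Complex.polarCoord.symm p) / ENNReal.ofReal ‖Complex.polarCoord.symm p‖) := by
      intro p hp
      rw [hT] at hp
      rw [polar_norm, abs_of_pos hp.1,
        ENNReal.mul_div_cancel (by simpa using hp.1) ENNReal.ofReal_ne_top]
    calc (∫⁻ θ in Ioo (-π) π, H θ)
        = ∫⁻ p in Ioc (0:ℝ) R ×ˢ Ioo (-π) π, W (Complex.polarCoord.symm p) := by
          rw [Measure.volume_eq_prod, ← Measure.prod_restrict,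
            lintegral_prod_symm _ hWsymm.aemeasurable]
      _ ≤ ∫⁻ p in Complex.polarCoord.target, W (Complex.polarCoord.symm p) := by
          rw [hT]
          exact lintegral_mono_set (prod_mono_left Ioc_subset_Ioi_self)
      _ ≤ ∫⁻ p in Complex.polarCoord.target, ENNReal.ofReal p.1 *
            (W (Complex.polarCoord.symm p) / ENNReal.ofReal ‖Complex.polarCoord.symm p‖) :=
          setLIntegral_mono' Complex.polarCoord.open_target.measurableSet keq
  calc (∫⁻ y in closedBall (0 : ℂ) R, ∫⁻ t in Ioc 0 ‖y‖, W ((t / ‖y‖) • y))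
      ≤ (∫⁻ ρ in Ioi (0:ℝ), (Ioc (0:ℝ) R).indicator (fun _ => ENNReal.ofReal R) ρ) *
        ∫⁻ θ in Ioo (-π) π, H θ := by rw [step1, ← step3]; exact step2
    _ ≤ (ENNReal.ofReal R * ENNReal.ofReal R) * ∫⁻ z, W z / ENNReal.ofReal ‖z‖ :=
        mul_le_mul' step4 step5
    _ = ENNReal.ofReal (R ^ 2) * ∫⁻ z, W z / ENNReal.ofReal ‖z‖ := by
        rw [← ENNReal.ofReal_mul hR, ← sq]

theorem coreC (R : ℝ) (hR : 0 ≤ R) (c : ℂ) (W : ℂ → ℝ≥0∞) (hW : Measurable W) :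
    (∫⁻ y in closedBall c R, ∫⁻ t in Ioc 0 ‖y - c‖, W (c + (t / ‖y - c‖) • (y - c))) ≤
      ENNReal.ofReal (R ^ 2) * ∫⁻ z, W z / ENNReal.ofReal ‖z - c‖ := by
  have hL : (∫⁻ y in closedBall c R, ∫⁻ t in Ioc 0 ‖y - c‖, W (c + (t / ‖y - c‖) • (y - c))) =
      ∫⁻ y in closedBall (0 : ℂ) R, ∫⁻ t in Ioc 0 ‖y‖, (fun z => W (z + c)) ((t / ‖y‖) • y) := by
    rw [← lintegral_indicator measurableSet_closedBall, ← lintegral_indicator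
      measurableSet_closedBall,
      ← lintegral_add_right_eq_self ((closedBall c R).indicator
        (fun y => ∫⁻ t in Ioc 0 ‖y - c‖, W (c + (t / ‖y - c‖) • (y - c)))) c]
    apply lintegral_congr fun y => ?_
    by_cases hy : y ∈ closedBall (0 : ℂ) R
    · have hy' : y + c ∈ closedBall c R := by
        simpa [mem_closedBall_iff_norm] using mem_closedBall_zero_iff.1 hy
      rw [indicator_of_mem hy', indicator_of_mem hy]
      simp only [add_sub_cancel_right]
      exact lintegral_congr fun t => by rw [add_comm]
    · have hy' : y + c ∉ closedBall c R := by
        simpa [mem_closedBall_iff_norm] using fun h => hy (mem_closedBall_zero_iff.2 h)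
      rw [indicator_of_notMem hy', indicator_of_notMem hy]
  have hR' : (∫⁻ z, W z / ENNReal.ofReal ‖z - c‖) =
      ∫⁻ z, (fun z => W (z + c)) z / ENNReal.ofReal ‖z‖ := by
    rw [← lintegral_add_right_eq_self (fun z => W z / ENNReal.ofReal ‖z - c‖) c]
    simp only [add_sub_cancel_right]
  rw [hL, hR']
  exact core0 R hR _ (hW.comp (measurable_add_const c))


theorem coreE (R : ℝ) (hR : 0 ≤ R) (x : E2) (W : E2 → ℝ≥0∞) (hW : Measurable W) :
    (∫⁻ y in closedBall x R, ∫⁻ t in Ioc 0 ‖y - x‖, W (x + (t / ‖y - x‖) • (y - x))) ≤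
      ENNReal.ofReal (R ^ 2) * ∫⁻ z, W z / ENNReal.ofReal ‖z - x‖ := by
  set e := Complex.orthonormalBasisOneI.repr with he
  have hMP : MeasurePreserving (⇑e) volume volume :=
    Complex.orthonormalBasisOneI.measurePreserving_repr
  have hemb : MeasurableEmbedding (⇑e) := e.toHomeomorph.measurableEmbedding
  set c := e.symm x with hc
  have hx : e c = x := e.apply_symm_apply x
  have hnorm : ∀ w : ℂ, ‖e w - x‖ = ‖w - c‖ := by
    intro w
    rw [← hx, ← map_sub, e.norm_map]
  have hpre : (⇑e) ⁻¹' closedBall x R = closedBall c R := by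
    ext w
    simp only [mem_preimage, mem_closedBall_iff_norm, hnorm]
  have hRHS : (∫⁻ z, W z / ENNReal.ofReal ‖z - x‖) =
      ∫⁻ w, W (e w) / ENNReal.ofReal ‖w - c‖ := by
    rw [← hMP.lintegral_comp_emb hemb (fun z => W z / ENNReal.ofReal ‖z - x‖)]
    exact lintegral_congr fun w => by rw [hnorm]
  have hLHS : (∫⁻ y in closedBall x R, ∫⁻ t in Ioc 0 ‖y - x‖,
      W (x + (t / ‖y - x‖) • (y - x))) =
      ∫⁻ w in closedBall c R, ∫⁻ t in Ioc 0 ‖w - c‖,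
        (fun z => W (e z)) (c + (t / ‖w - c‖) • (w - c)) := by
    rw [← hMP.setLIntegral_comp_preimage_emb hemb
      (fun y => ∫⁻ t in Ioc 0 ‖y - x‖, W (x + (t / ‖y - x‖) • (y - x))) (closedBall x R), hpre]
    apply setLIntegral_congr_fun measurableSet_closedBall
    intro w _
    beta_reduce
    rw [hnorm]
    apply lintegral_congr fun t => ?_
    congr 1
    rw [← hx, ← map_sub, map_add, LinearIsometryEquiv.map_smul]
  rw [hRHS, hLHS]
  exact coreC R hR c _ (hW.comp hemb.measurable)

theorem fin0 (R : ℝ) :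
    (∫⁻ z in closedBall (0 : ℂ) R, (ENNReal.ofReal ‖z‖)⁻¹) < ⊤ := by
  have hT : Complex.polarCoord.target = Ioi (0:ℝ) ×ˢ Ioo (-π) π := Complex.polarCoord_target
  rw [← lintegral_indicator measurableSet_closedBall,
    ← Complex.lintegral_comp_polarCoord_symm'
      ((closedBall (0:ℂ) R).indicator fun z => (ENNReal.ofReal ‖z‖)⁻¹)]
  have hb : (∫⁻ p in Complex.polarCoord.target, ENNReal.ofReal p.1 *
      (closedBall (0:ℂ) R).indicator (fun z => (ENNReal.ofReal ‖z‖)⁻¹)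
        (Complex.polarCoord.symm p)) ≤
      ∫⁻ p in Complex.polarCoord.target, (Ioc (0:ℝ) R ×ˢ (univ : Set ℝ)).indicator 1 p := by
    apply setLIntegral_mono' Complex.polarCoord.open_target.measurableSet
    intro p hp
    rw [hT] at hp
    have hp1 : 0 < p.1 := hp.1
    by_cases hmem : Complex.polarCoord.symm p ∈ closedBall (0:ℂ) R
    · have hnorm : ‖Complex.polarCoord.symm p‖ = p.1 := by
        rw [polar_norm, abs_of_pos hp1]
      have hle : p.1 ≤ R := by
        have := mem_closedBall_zero_iff.1 hmem
        rwa [hnorm] at this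
      rw [indicator_of_mem hmem, hnorm,
        ENNReal.mul_inv_cancel (by simpa using hp1) ENNReal.ofReal_ne_top,
        indicator_of_mem (by exact ⟨⟨hp1, hle⟩, mem_univ _⟩)]
      rfl
    · rw [indicator_of_notMem hmem, mul_zero]
      exact zero_le
  refine lt_of_le_of_lt hb ?_
  rw [lintegral_indicator_one ((measurableSet_Ioc).prod MeasurableSet.univ),
    Measure.restrict_apply ((measurableSet_Ioc).prod MeasurableSet.univ)]
  refine lt_of_le_of_lt (measure_mono (t := Ioc (0:ℝ) R ×ˢ Ioo (-π) π) ?_) ?_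
  · rw [hT]
    rintro ⟨a, b⟩ ⟨⟨ha, _⟩, hb⟩
    exact ⟨ha, hb.2⟩
  · rw [Measure.volume_eq_prod, Measure.prod_prod]
    simp [Real.volume_Ioc, Real.volume_Ioo]; exact ENNReal.mul_lt_top ENNReal.ofReal_lt_top ENNReal.ofReal_lt_top

theorem finC (R : ℝ) (c : ℂ) :
    (∫⁻ z in closedBall c R, (ENNReal.ofReal ‖z - c‖)⁻¹) < ⊤ := by
  have : (∫⁻ z in closedBall c R, (ENNReal.ofReal ‖z - c‖)⁻¹) =
      ∫⁻ z in closedBall (0:ℂ) R, (ENNReal.ofReal ‖z‖)⁻¹ := by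
    rw [← lintegral_indicator measurableSet_closedBall, ← lintegral_indicator
      measurableSet_closedBall,
      ← lintegral_add_right_eq_self ((closedBall c R).indicator
        fun z => (ENNReal.ofReal ‖z - c‖)⁻¹) c]
    apply lintegral_congr fun z => ?_
    by_cases hz : z ∈ closedBall (0:ℂ) R
    · have hz' : z + c ∈ closedBall c R := by
        simpa [mem_closedBall_iff_norm] using mem_closedBall_zero_iff.1 hz
      rw [indicator_of_mem hz', indicator_of_mem hz, add_sub_cancel_right]
    · have hz' : z + c ∉ closedBall c R := by
        simpa [mem_closedBall_iff_norm] using fun h => hz (mem_closedBall_zero_iff.2 h)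
      rw [indicator_of_notMem hz', indicator_of_notMem hz]
  rw [this]
  exact fin0 R


theorem finE (R : ℝ) (x : E2) :
    (∫⁻ z in closedBall x R, (ENNReal.ofReal ‖z - x‖)⁻¹) < ⊤ := by
  set e := Complex.orthonormalBasisOneI.repr with he
  have hMP : MeasurePreserving (⇑e) volume volume :=
    Complex.orthonormalBasisOneI.measurePreserving_repr
  have hemb : MeasurableEmbedding (⇑e) := e.toHomeomorph.measurableEmbedding
  set c := e.symm x with hc
  have hx : e c = x := e.apply_symm_apply x
  have hnorm : ∀ w : ℂ, ‖e w - x‖ = ‖w - c‖ := by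
    intro w; rw [← hx, ← map_sub, e.norm_map]
  have hpre : (⇑e) ⁻¹' closedBall x R = closedBall c R := by
    ext w; simp only [mem_preimage, mem_closedBall_iff_norm, hnorm]
  have : (∫⁻ z in closedBall x R, (ENNReal.ofReal ‖z - x‖)⁻¹) =
      ∫⁻ w in closedBall c R, (ENNReal.ofReal ‖w - c‖)⁻¹ := by
    rw [← hMP.setLIntegral_comp_preimage_emb hemb
      (fun z => (ENNReal.ofReal ‖z - x‖)⁻¹) (closedBall x R), hpre]
    exact setLIntegral_congr_fun measurableSet_closedBall
      (fun w _ => by beta_reduce; rw [hnorm])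
  rw [this]
  exact finC R c

end PoincareAux

section PoincareMain
open Set Real
open scoped ENNReal NNReal

/-- Pointwise Poincaré estimate (Gilbarg–Trudinger Lemma 7.16, n = 2): if `u` is C¹
on a neighborhood of the closed ball `B = B(x₀,r) ⊂ ℝ²`, then for every `x ∈ B`,
`|u(x) - u_B| ≤ 2 ∫_B |∇u(y)|/|x-y| dy`, where `u_B = (1/(πr²)) ∫_B u`. -/
theorem stmt5 (x₀ : E2) (r : ℝ) (hr : 0 < r)
    (U : Set E2) (hU : IsOpen U) (hBU : closedBall x₀ r ⊆ U)
    (u : E2 → ℝ) (hu : ContDiffOn ℝ 1 u U)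
    (x : E2) (hx : x ∈ closedBall x₀ r) :
    |u x - (1 / (Real.pi * r ^ 2)) * ∫ y in closedBall x₀ r, u y| ≤
      2 * ∫ y in closedBall x₀ r, ‖fderiv ℝ u y‖ / ‖x - y‖ := by
  set B := closedBall x₀ r with hB
  have hBcpt : IsCompact B := isCompact_closedBall _ _
  have hconv : Convex ℝ B := convex_closedBall _ _
  have hucont : ContinuousOn u B := (hu.continuousOn).mono hBU
  have hDuU : ContinuousOn (fderiv ℝ u) U := hu.continuousOn_fderiv_of_isOpen hU le_rfl
  have hDucont : ContinuousOn (fderiv ℝ u) B := hDuU.mono hBU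
  set W : E2 → ℝ≥0∞ := B.indicator (fun z => ENNReal.ofReal ‖fderiv ℝ u z‖) with hW
  have hWmeas : Measurable W :=
    (((measurable_fderiv ℝ u).norm).ennreal_ofReal).indicator measurableSet_closedBall
  set g : E2 → ℝ≥0∞ := fun y => ∫⁻ t in Ioc 0 ‖y - x‖, W (x + (t / ‖y - x‖) • (y - x)) with hg
  -- Step A: pointwise FTC bound
  have stepA : ∀ y ∈ B, ENNReal.ofReal |u x - u y| ≤ g y := by
    intro y hy
    by_cases hxy : y = x
    · simp [hxy]
    have hρ : (0:ℝ) < ‖y - x‖ := by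
      rw [norm_sub_pos_iff]; exact hxy
    set ρ := ‖y - x‖ with hρdef
    set ω := ρ⁻¹ • (y - x) with hω
    set γ := fun t : ℝ => x + t • ω with hγ
    have hγmem : ∀ t ∈ Icc 0 ρ, γ t ∈ B := by
      intro t ht
      have : γ t = x + (t / ρ) • (y - x) := by
        simp only [hγ, hω, smul_smul, div_eq_mul_inv]
      rw [this]
      exact hconv.add_smul_sub_mem hx hy
        ⟨div_nonneg ht.1 hρ.le, div_le_one_of_le₀ ht.2 hρ.le⟩
    have hγU : ∀ t ∈ Icc 0 ρ, γ t ∈ U := fun t ht => hBU (hγmem t ht)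
    have hγcont : Continuous γ := continuous_const.add (continuous_id.smul continuous_const)
    have hderiv : ∀ t ∈ uIcc 0 ρ, HasDerivAt (fun s => u (γ s)) ((fderiv ℝ u (γ t)) ω) t := by
      intro t ht
      rw [uIcc_of_le hρ.le] at ht
      have hdiff : DifferentiableAt ℝ u (γ t) :=
        (hu.contDiffAt (hU.mem_nhds (hγU t ht))).differentiableAt one_ne_zero
      have h2 : HasDerivAt γ ω t := by
        simpa [hγ] using ((hasDerivAt_id t).smul_const ω).const_add x
      exact hdiff.hasFDerivAt.comp_hasDerivAt t h2
    have hDuγ : ContinuousOn (fun t => (fderiv ℝ u (γ t)) ω) (Icc 0 ρ) :=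
      ((hDuU.comp hγcont.continuousOn hγU).clm_apply continuousOn_const)
    have hDuγ' : ContinuousOn (fun t => (fderiv ℝ u (γ t)) ω) (uIcc 0 ρ) := by
      rw [uIcc_of_le hρ.le]; exact hDuγ
    have hnγ : ContinuousOn (fun t => ‖fderiv ℝ u (γ t)‖) (uIcc 0 ρ) := by
      rw [uIcc_of_le hρ.le]; exact (hDuU.comp hγcont.continuousOn hγU).norm
    have hint : IntervalIntegrable (fun t => (fderiv ℝ u (γ t)) ω) volume 0 ρ :=
      hDuγ'.intervalIntegrable
    have hFTC : ∫ t in (0:ℝ)..ρ, (fderiv ℝ u (γ t)) ω = u (γ ρ) - u (γ 0) :=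
      intervalIntegral.integral_eq_sub_of_hasDerivAt hderiv hint
    have hγ0 : γ 0 = x := by simp [hγ]
    have hγρ : γ ρ = y := by
      simp only [hγ, hω, smul_smul, mul_inv_cancel₀ hρ.ne', one_smul]
      abel
    have hnormω : ‖ω‖ = 1 := by
      rw [hω, norm_smul, norm_inv, Real.norm_eq_abs, abs_of_pos hρ, inv_mul_cancel₀ hρ.ne']
    have habs : |u x - u y| ≤ ∫ t in (0:ℝ)..ρ, ‖fderiv ℝ u (γ t)‖ := by
      rw [abs_sub_comm, ← hγρ, ← hγ0, ← hFTC]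
      calc |∫ t in (0:ℝ)..ρ, (fderiv ℝ u (γ t)) ω|
          ≤ ∫ t in (0:ℝ)..ρ, ‖(fderiv ℝ u (γ t)) ω‖ := by
            simpa using intervalIntegral.norm_integral_le_integral_norm
              (f := fun t => (fderiv ℝ u (γ t)) ω) (μ := volume) hρ.le
        _ ≤ ∫ t in (0:ℝ)..ρ, ‖fderiv ℝ u (γ t)‖ := by
            apply intervalIntegral.integral_mono_on hρ.le
              (hDuγ'.norm.intervalIntegrable) (hnγ.intervalIntegrable)
            · intro t ht
              calc ‖(fderiv ℝ u (γ t)) ω‖ ≤ ‖fderiv ℝ u (γ t)‖ * ‖ω‖ :=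
                    (fderiv ℝ u (γ t)).le_opNorm ω
                _ = ‖fderiv ℝ u (γ t)‖ := by rw [hnormω, mul_one]
    have heq : ∫ t in (0:ℝ)..ρ, ‖fderiv ℝ u (γ t)‖ =
        (∫⁻ t in Ioc 0 ρ, ENNReal.ofReal ‖fderiv ℝ u (γ t)‖).toReal := by
      rw [intervalIntegral.integral_of_le hρ.le]
      apply integral_eq_lintegral_of_nonneg_ae
      · exact Filter.Eventually.of_forall fun t => norm_nonneg _
      · exact (((hDuU.comp hγcont.continuousOn hγU).norm).mono Ioc_subset_Icc_self
          ).aestronglyMeasurable measurableSet_Ioc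
    have hlint : (∫⁻ t in Ioc 0 ρ, ENNReal.ofReal ‖fderiv ℝ u (γ t)‖) = g y := by
      rw [hg]
      apply setLIntegral_congr_fun measurableSet_Ioc
      intro t ht
      beta_reduce
      have h1 : x + (t / ρ) • (y - x) = γ t := by
        simp only [hγ, hω, smul_smul, div_eq_mul_inv]
      rw [h1, hW, indicator_of_mem (hγmem t ⟨ht.1.le, ht.2⟩)]
    calc ENNReal.ofReal |u x - u y|
        ≤ ENNReal.ofReal ((∫⁻ t in Ioc 0 ρ, ENNReal.ofReal ‖fderiv ℝ u (γ t)‖).toReal) := by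
          apply ENNReal.ofReal_le_ofReal
          rw [← heq]; exact habs
      _ ≤ ∫⁻ t in Ioc 0 ρ, ENNReal.ofReal ‖fderiv ℝ u (γ t)‖ := ENNReal.ofReal_toReal_le
      _ = g y := hlint
  -- ball inclusion
  have hsub2 : B ⊆ closedBall x (2 * r) := by
    intro y hy
    rw [mem_closedBall] at hy hx ⊢
    calc dist y x ≤ dist y x₀ + dist x₀ x := dist_triangle _ _ _
      _ ≤ r + r := add_le_add hy (by rwa [dist_comm] at hx)
      _ = 2 * r := by ring
  -- the Riesz potential integral
  set I : ℝ≥0∞ := ∫⁻ z, W z / ENNReal.ofReal ‖z - x‖ with hI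
  have hIeq : I = ∫⁻ z in B, ENNReal.ofReal ‖fderiv ℝ u z‖ / ENNReal.ofReal ‖z - x‖ := by
    rw [hI, ← lintegral_indicator measurableSet_closedBall]
    apply lintegral_congr fun z => ?_
    by_cases hz : z ∈ B
    · rw [hW, indicator_of_mem hz, indicator_of_mem hz]
    · rw [hW, indicator_of_notMem hz, indicator_of_notMem hz, ENNReal.zero_div]
  have hIfin : I < ⊤ := by
    obtain ⟨M, hM⟩ := hBcpt.exists_bound_of_continuousOn hDucont
    have hM0 : 0 ≤ M := le_trans (norm_nonneg _) (hM x hx)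
    calc I ≤ ∫⁻ z in B, ENNReal.ofReal M * (ENNReal.ofReal ‖z - x‖)⁻¹ := by
          rw [hIeq]
          apply setLIntegral_mono' measurableSet_closedBall
          intro z hz
          rw [ENNReal.div_eq_inv_mul, mul_comm]
          exact mul_le_mul' (ENNReal.ofReal_le_ofReal (hM z hz)) le_rfl
      _ = ENNReal.ofReal M * ∫⁻ z in B, (ENNReal.ofReal ‖z - x‖)⁻¹ := by
          rw [lintegral_const_mul' _ _ ENNReal.ofReal_ne_top]
      _ ≤ ENNReal.ofReal M * ∫⁻ z in closedBall x (2 * r), (ENNReal.ofReal ‖z - x‖)⁻¹ :=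
          mul_le_mul' le_rfl (lintegral_mono_set hsub2)
      _ < ⊤ := ENNReal.mul_lt_top ENNReal.ofReal_lt_top (finE (2 * r) x)
  -- chain of lintegral bounds
  have hchain : (∫⁻ y in B, ENNReal.ofReal |u x - u y|) ≤ ENNReal.ofReal ((2 * r) ^ 2) * I :=
    calc (∫⁻ y in B, ENNReal.ofReal |u x - u y|) ≤ ∫⁻ y in B, g y :=
          setLIntegral_mono' measurableSet_closedBall stepA
      _ ≤ ∫⁻ y in closedBall x (2 * r), g y := lintegral_mono_set hsub2
      _ ≤ ENNReal.ofReal ((2 * r) ^ 2) * I := coreE (2 * r) (by positivity) x W hWmeas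
  -- the right-hand side integral
  have hvol : volume B ≠ ⊤ := hBcpt.measure_lt_top.ne
  have hintu : IntegrableOn u B := hucont.integrableOn_compact hBcpt
  have hJmeas : AEStronglyMeasurable (fun y : E2 => ‖fderiv ℝ u y‖ / ‖x - y‖)
      (volume.restrict B) :=
    (((measurable_fderiv ℝ u).norm).div
      ((measurable_const.sub measurable_id).norm)).aestronglyMeasurable
  have hJ : (∫ y in B, ‖fderiv ℝ u y‖ / ‖x - y‖) = I.toReal := by
    rw [integral_eq_lintegral_of_nonneg_ae
      (Filter.Eventually.of_forall fun y => div_nonneg (norm_nonneg _) (norm_nonneg _)) hJmeas,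
      hIeq]
    congr 1
    have hae : ∀ᵐ (y : E2) ∂(volume.restrict B), y ≠ x := by
      apply ae_restrict_of_ae
      have h0 : volume ({x} : Set E2) = 0 := measure_singleton x
      rw [ae_iff]
      simpa [Ne, not_not, setOf_eq_eq_singleton] using h0
    apply lintegral_congr_ae
    filter_upwards [hae] with y hy
    have hpos : 0 < ‖x - y‖ := by rw [norm_sub_pos_iff]; exact fun h => hy h.symm
    rw [ENNReal.ofReal_div_of_pos hpos, norm_sub_rev x y]
  have hJ0 : 0 ≤ I.toReal := ENNReal.toReal_nonneg
  -- averaging identity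
  have hmB : (volume B).toReal = Real.pi * r ^ 2 := by
    set e := Complex.orthonormalBasisOneI.repr with he
    have hMP : MeasurePreserving (⇑e) volume volume :=
      Complex.orthonormalBasisOneI.measurePreserving_repr
    have hnorm : ∀ w : ℂ, ‖e w - x₀‖ = ‖w - e.symm x₀‖ := fun w => by
      rw [show ‖e w - x₀‖ = ‖e (w - e.symm x₀)‖ by rw [map_sub, e.apply_symm_apply], e.norm_map]
    have hpre : (⇑e) ⁻¹' B = closedBall (e.symm x₀) r := by
      ext w
      simp only [hB, mem_preimage, mem_closedBall_iff_norm, hnorm]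
    have hv : volume B = ENNReal.ofReal r ^ 2 * NNReal.pi := by
      rw [← hMP.measure_preimage measurableSet_closedBall.nullMeasurableSet, hpre,
        Complex.volume_closedBall]
    rw [hv, ENNReal.toReal_mul, ENNReal.toReal_pow, ENNReal.toReal_ofReal hr.le,
      ENNReal.coe_toReal, NNReal.coe_real_pi]
    ring
  have hmpos : (0:ℝ) < Real.pi * r ^ 2 := by positivity
  have havg : u x - (1 / (Real.pi * r ^ 2)) * ∫ y in B, u y =
      (1 / (Real.pi * r ^ 2)) * ∫ y in B, (u x - u y) := by
    rw [integral_sub (integrableOn_const (C := u x) hBcpt.measure_lt_top.ne) hintu,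
      setIntegral_const, measureReal_def, hmB, smul_eq_mul]
    field_simp
  have habs2 : |∫ y in B, (u x - u y)| ≤ ((ENNReal.ofReal ((2*r)^2)) * I).toReal := by
    have h1 : |∫ y in B, (u x - u y)| ≤ ∫ y in B, |u x - u y| := by
      simpa [Real.norm_eq_abs] using
        norm_integral_le_integral_norm (μ := volume.restrict B) (f := fun y => u x - u y)
    have h2 : (∫ y in B, |u x - u y|) =
        (∫⁻ y in B, ENNReal.ofReal |u x - u y|).toReal := by
      apply integral_eq_lintegral_of_nonneg_ae
        (Filter.Eventually.of_forall fun y => abs_nonneg _)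
      exact ((aestronglyMeasurable_const (b := u x)).sub hintu.aestronglyMeasurable).norm.congr
        (Filter.Eventually.of_forall fun y => by simp [Real.norm_eq_abs])
    refine h1.trans ?_
    rw [h2]
    exact ENNReal.toReal_mono (ENNReal.mul_ne_top ENNReal.ofReal_ne_top hIfin.ne) hchain
  -- final computation
  rw [havg, abs_mul, abs_of_pos (by positivity : (0:ℝ) < 1 / (Real.pi * r ^ 2)), hJ]
  calc (1 / (Real.pi * r ^ 2)) * |∫ y in B, (u x - u y)|
      ≤ (1 / (Real.pi * r ^ 2)) * ((ENNReal.ofReal ((2*r)^2)) * I).toReal :=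
        mul_le_mul_of_nonneg_left habs2 (by positivity)
    _ = (1 / (Real.pi * r ^ 2)) * ((2*r)^2 * I.toReal) := by
        rw [ENNReal.toReal_mul, ENNReal.toReal_ofReal (by positivity)]
    _ ≤ 2 * I.toReal := by
        have hπ : (3:ℝ) < Real.pi := Real.pi_gt_three
        rw [div_mul_eq_mul_div, one_mul, div_le_iff₀ hmpos]
        nlinarith [mul_nonneg (sq_nonneg r) hJ0, hπ]

end PoincareMain
end
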